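/- For all natural numbers k ≤ d, any two distinct occurrences of S_k in S_d are non-overlapping: if S_k appears in S_d at positions i and i' with i < i', then i' ≥ i + |S_k|. -/

import Mathlib

def S : ℕ → List ℕ
  | 0 => [1]
  | k + 1 => S k ++ S k ++ [2 ^ (k + 1)]

lemma S_length (k : ℕ) : (S k).length = 2 ^ (k + 1) - 1 := by
  induction k with
  | zero => simp [S]
  | succ n ih =>
    simp [S, ih, pow_succ]
    have : 1 ≤ 2 ^ (n + 1) := Nat.one_le_two_pow
    omega

lemma S_mem_le {m x : ℕ} (hx : x ∈ S m) : x ≤ 2 ^ m := by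
  induction m with
  | zero => simp only [S, List.mem_singleton] at hx; omega
  | succ n ih =>
    rw [show S (n+1) = S n ++ S n ++ [2 ^ (n+1)] from rfl] at hx
    simp only [List.mem_append, List.mem_singleton] at hx
    rcases hx with (h | h) | h
    · exact (ih h).trans (Nat.pow_le_pow_right (by omega) (Nat.le_succ n))
    · exact (ih h).trans (Nat.pow_le_pow_right (by omega) (Nat.le_succ n))
    · omega

-- first occurrence lower bound
lemma S_first (m k j : ℕ) (hk : 1 ≤ k) (hj : j < (S m).length)
    (he : (S m)[j]'hj = 2 ^ k) : 2 ^ (k + 1) ≤ j + 2 := by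
  induction m generalizing j with
  | zero =>
    simp [S] at hj
    subst hj
    simp [S] at he
    have : 2 ≤ 2 ^ k := Nat.one_lt_two_pow_iff.mpr (by omega)
    omega
  | succ n ih =>
    have hL : (S n).length = 2 ^ (n + 1) - 1 := S_length n
    have hL1 : 1 ≤ 2 ^ (n + 1) := Nat.one_le_two_pow
    by_cases h1 : j < (S n).length
    · have : (S (n + 1))[j]'hj = (S n)[j]'h1 := by
        show ((S n ++ S n ++ [2 ^ (n + 1)]))[j]'(by simp only [List.length_append, List.length_singleton]; simp only [S, List.length_append, List.length_singleton] at hj; omega) = _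
        rw [List.getElem_append_left (by simp; omega), List.getElem_append_left h1]
      exact ih j h1 (this ▸ he)
    · push_neg at h1
      by_cases h2 : j - (S n).length < (S n).length
      · have : (S (n + 1))[j]'hj = (S n)[j - (S n).length]'h2 := by
          show ((S n ++ S n ++ [2 ^ (n + 1)]))[j]'(by simp only [List.length_append, List.length_singleton]; simp only [S, List.length_append, List.length_singleton] at hj; omega) = _
          rw [List.getElem_append_left (by simp; omega), List.getElem_append_right h1]
        have := ih _ h2 (this ▸ he)
        omega
      · push_neg at h2
        have hj2 : j = 2 * (S n).length := by
          simp [S, S_length] at hj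
          omega
        have : (S (n + 1))[j]'hj = 2 ^ (n + 1) := by
          show ((S n ++ S n ++ [2 ^ (n + 1)]))[j]'(by simp only [List.length_append, List.length_singleton]; simp only [S, List.length_append, List.length_singleton] at hj; omega) = _
          rw [List.getElem_append_right (by simp; omega)]
          simp
        rw [this] at he
        have hkn : k = n + 1 := by
          have := Nat.pow_right_injective (le_refl 2) he.symm
          omega
        subst hkn
        rw [hj2, hL]
        ring_nf
        omega

lemma S_gap (m k j j' : ℕ) (hk : 1 ≤ k) (hj : j < (S m).length) (hj' : j' < (S m).length)
    (hlt : j < j') (he : (S m)[j]'hj = 2 ^ k) (he' : (S m)[j']'hj' = 2 ^ k) :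
    j + (2 ^ (k + 1) - 1) ≤ j' := by
  have hk1 : 1 ≤ 2 ^ (k + 1) := Nat.one_le_two_pow
  induction m generalizing j j' with
  | zero => simp [S] at hj hj'; omega
  | succ n ih =>
    have hL : (S n).length = 2 ^ (n + 1) - 1 := S_length n
    have hL1 : 1 ≤ 2 ^ (n + 1) := Nat.one_le_two_pow
    have egen : ∀ (a : ℕ) (ha : a < (S (n+1)).length), a < 2 * (S n).length →
        ∃ (b : ℕ) (hb : b < (S n).length), (S (n+1))[a]'ha = (S n)[b]'hb ∧
          (a < (S n).length → b = a) ∧ ((S n).length ≤ a → b = a - (S n).length) := by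
      intro a ha h2
      by_cases h1 : a < (S n).length
      · refine ⟨a, h1, ?_, fun _ => rfl, fun h => absurd h (by omega)⟩
        show ((S n ++ S n ++ [2 ^ (n + 1)]))[a]'(by simp only [List.length_append, List.length_singleton]; simp only [S, List.length_append, List.length_singleton] at ha; omega) = _
        rw [List.getElem_append_left (by simp; omega), List.getElem_append_left h1]
      · push_neg at h1
        refine ⟨a - (S n).length, by omega, ?_, fun h => absurd h (by omega), fun _ => rfl⟩
        show ((S n ++ S n ++ [2 ^ (n + 1)]))[a]'(by simp only [List.length_append, List.length_singleton]; simp only [S, List.length_append, List.length_singleton] at ha; omega) = _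
        rw [List.getElem_append_left (by simp; omega), List.getElem_append_right h1]
    by_cases h2 : j' < 2 * (S n).length
    · obtain ⟨b', hb', eb', hlo', hhi'⟩ := egen j' hj' h2
      obtain ⟨b, hb, eb, hlo, hhi⟩ := egen j hj (by omega)
      rw [eb] at he; rw [eb'] at he'
      by_cases hc : j' < (S n).length
      · have h1 := hlo (by omega)
        have h1' := hlo' hc
        have := ih b b' hb hb' (by omega) he he'
        omega
      · push_neg at hc
        have h1' := hhi' hc
        by_cases hcj : j < (S n).length
        · -- cross case: use S_first on b'
          have h1 := hlo hcj
          have := S_first n k b' hk hb' he'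
          omega
        · push_neg at hcj
          have h1 := hhi hcj
          have := ih b b' hb hb' (by omega) he he'
          omega
    · -- j' = 2L, entry is 2^(n+1)
      push_neg at h2
      have hj2 : j' = 2 * (S n).length := by
        simp [S, S_length] at hj'
        omega
      have hval : (S (n + 1))[j']'hj' = 2 ^ (n + 1) := by
        show ((S n ++ S n ++ [2 ^ (n + 1)]))[j']'(by simp only [List.length_append, List.length_singleton]; simp only [S, List.length_append, List.length_singleton] at hj'; omega) = _
        rw [List.getElem_append_right (by simp; omega)]
        simp
      rw [hval] at he'
      have hkn : k = n + 1 := by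
        have := Nat.pow_right_injective (le_refl 2) he'.symm
        omega
      subst hkn
      -- j is in one of the copies, so its value is in S n, ≤ 2^n < 2^(n+1)
      obtain ⟨b, hb, eb, _, _⟩ := egen j hj (by omega)
      rw [eb] at he
      have : (S n)[b]'hb ∈ S n := List.getElem_mem _
      have := S_mem_le (he ▸ this)
      have : 2 ^ n < 2 ^ (n + 1) := Nat.pow_lt_pow_right (by omega) (by omega)
      omega

lemma S_last (k : ℕ) (h : (S (k+1)).length - 1 < (S (k+1)).length) :
    (S (k + 1))[(S (k+1)).length - 1]'h = 2 ^ (k + 1) := by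
  have hL : (S k).length = 2 ^ (k + 1) - 1 := S_length k
  have hL1 : 1 ≤ 2 ^ (k + 1) := Nat.one_le_two_pow
  have hlen2 : (S (k+1)).length = (S k).length + (S k).length + 1 := by simp [S]; omega
  show ((S k ++ S k ++ [2 ^ (k + 1)]))[(S (k+1)).length - 1]'(by simp only [List.length_append, List.length_singleton]; omega) = _
  rw [List.getElem_append_right (by simp only [List.length_append]; omega)]
  rw [List.getElem_singleton]

theorem S_appearances_disjoint (k d : ℕ) (h : k ≤ d) (i i' : ℕ) (hlt : i < i')
    (hi : ((S d).drop i).take ((S k).length) = S k)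
    (hi' : ((S d).drop i').take ((S k).length) = S k) :
    i' ≥ i + (S k).length := by
  match k with
  | 0 => simp [S]; omega
  | n + 1 =>
    have hL : (S (n + 1)).length = 2 ^ (n + 2) - 1 := S_length (n + 1)
    have hL1 : 1 ≤ 2 ^ (n + 2) := Nat.one_le_two_pow
    have hX : 1 ≤ (S (n + 1)).length := List.length_pos_iff.mpr (by simp [S])
    have hL2 : 2 ≤ 2 ^ (n + 2) := by
      calc 2 = 2 ^ 1 := rfl
      _ ≤ 2 ^ (n + 2) := Nat.pow_le_pow_right (by omega) (by omega)
    have hlenof : ∀ a : ℕ, ((S d).drop a).take ((S (n+1)).length) = S (n+1) →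
        a + (S (n + 1)).length ≤ (S d).length := by
      intro a ha
      have h0 := congrArg List.length ha
      rw [List.length_take, List.length_drop] at h0
      have h2 : (S (n+1)).length ≤ (S d).length - a := by
        rw [← h0]; exact min_le_right _ _
      omega
    have hlen := hlenof i hi
    have hlen' := hlenof i' hi'
    have key : ∀ (a : ℕ), a + (S (n+1)).length ≤ (S d).length →
        ((S d).drop a).take ((S (n+1)).length) = S (n + 1) →
        ∃ (hb : a + ((S (n+1)).length - 1) < (S d).length),
          (S d)[a + ((S (n+1)).length - 1)]'hb = 2 ^ (n + 1) := by
      intro a hal ha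
      have h1 : a + ((S (n+1)).length - 1) < (S d).length := by omega
      have w : (S (n+1)).length - 1 < (((S d).drop a).take ((S (n+1)).length)).length := by
        rw [ha]; omega
      have e0 : (((S d).drop a).take ((S (n+1)).length))[(S (n+1)).length - 1]'w = 2 ^ (n+1) := by
        rw [List.getElem_of_eq ha]
        exact S_last n _
      rw [List.getElem_take, List.getElem_drop] at e0
      exact ⟨h1, e0⟩
    obtain ⟨h1, e1⟩ := key i hlen hi
    obtain ⟨h1', e1'⟩ := key i' hlen' hi'
    have hgap := S_gap d (n + 1) (i + ((S (n+1)).length - 1)) (i' + ((S (n+1)).length - 1))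
      (by omega) h1 h1' (by omega) e1 e1'
    have hgap2 : (i + ((S (n+1)).length - 1)) + (S (n+1)).length ≤ i' + ((S (n+1)).length - 1) := by
      calc (i + ((S (n+1)).length - 1)) + (S (n+1)).length
          = (i + ((S (n+1)).length - 1)) + (2 ^ (n + 1 + 1) - 1) := by rw [S_length]
        _ ≤ i' + ((S (n+1)).length - 1) := hgap
    rw [ge_iff_le]
    omega
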